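/- Fix λ > 0 and p a probability distribution on ℝ^d with bounded support. Define the iteration: U⁽⁰⁾ = I, F⁽ᵏ⁾ = E_{x∼p}[(U⁽ᵏ⁾ x xᵀ U⁽ᵏ⁾)/‖U⁽ᵏ⁾ x‖ · 1{x≠0}] + λ U⁽ᵏ⁾, and U⁽ᵏ⁺¹⁾ = sym((F⁽ᵏ⁾)^{-1/2} U⁽ᵏ⁾), where sym(A) = (Aᵀ A)^{1/2}. Then for every k, λ_min(F⁽ᵏ⁾)^{1/2} ≤ λ_min(F⁽ᵏ⁺¹⁾) ≤ λ_max(F⁽ᵏ⁺¹⁾) ≤ λ_max(F⁽ᵏ⁾)^{1/2}. -/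

import Mathlib

open MeasureTheory Matrix
open scoped Classical

/-- Euclidean norm on `Fin d → ℝ`. -/
noncomputable def enorm' {d : ℕ} (v : Fin d → ℝ) : ℝ := Real.sqrt (∑ i, (v i)^2)

/-- Euclidean inner product on `Fin d → ℝ`. -/
noncomputable def einner' {d : ℕ} (v w : Fin d → ℝ) : ℝ := ∑ i, v i * w i

/-- Operator (spectral) norm of a real matrix. -/
noncomputable def opNorm {d : ℕ} (M : Matrix (Fin d) (Fin d) ℝ) : ℝ :=
  ‖(Matrix.toEuclideanCLM (𝕜 := ℝ) M :
      EuclideanSpace ℝ (Fin d) →L[ℝ] EuclideanSpace ℝ (Fin d))‖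

/-- Positive semidefinite square root (junk value `0` on non-PSD matrices). -/
noncomputable def psqrt {d : ℕ} (A : Matrix (Fin d) (Fin d) ℝ) : Matrix (Fin d) (Fin d) ℝ :=
  if h : A.PosSemidef then
    h.1.eigenvectorUnitary.1 * diagonal ((↑) ∘ Real.sqrt ∘ h.1.eigenvalues) *
      (star h.1.eigenvectorUnitary : Matrix (Fin d) (Fin d) ℝ)
  else 0

/-- Entrywise expectation of a matrix-valued function. -/
noncomputable def mExp {d : ℕ} (p : Measure (Fin d → ℝ))
    (f : (Fin d → ℝ) → Matrix (Fin d) (Fin d) ℝ) : Matrix (Fin d) (Fin d) ℝ :=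
  Matrix.of fun i j => ∫ x, f x i j ∂p

/-- The LDP operator `F(U) = E[(U x xᵀ U)/‖U x‖ · 1{x ≠ 0}] + λ U`. -/
noncomputable def FLDP {d : ℕ} (p : Measure (Fin d → ℝ)) (lam : ℝ)
    (U : Matrix (Fin d) (Fin d) ℝ) : Matrix (Fin d) (Fin d) ℝ :=
  mExp p (fun x => if x = 0 then 0
    else (enorm' (U.mulVec x))⁻¹ • vecMulVec (U.mulVec x) (U.mulVec x)) + lam • U

/-- The DP operator `G(W) = E[(W x xᵀ W)/(1 + γ‖W x‖)] + λ W`. -/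
noncomputable def FJDP {d : ℕ} (p : Measure (Fin d → ℝ)) (γ lam : ℝ)
    (W : Matrix (Fin d) (Fin d) ℝ) : Matrix (Fin d) (Fin d) ℝ :=
  mExp p (fun x => (1 + γ * enorm' (W.mulVec x))⁻¹ • vecMulVec (W.mulVec x) (W.mulVec x))
    + lam • W

/-- `sym(A) = (Aᵀ A)^{1/2}`. -/
noncomputable def symMat {d : ℕ} (A : Matrix (Fin d) (Fin d) ℝ) : Matrix (Fin d) (Fin d) ℝ :=
  psqrt (Aᵀ * A)

/-- Smallest eigenvalue of a Hermitian matrix (junk value `0` otherwise). -/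
noncomputable def lmin {d : ℕ} (A : Matrix (Fin d) (Fin d) ℝ) : ℝ :=
  if h : A.IsHermitian then ⨅ i, h.eigenvalues i else 0

/-- Largest eigenvalue of a Hermitian matrix (junk value `0` otherwise). -/
noncomputable def lmax {d : ℕ} (A : Matrix (Fin d) (Fin d) ℝ) : ℝ :=
  if h : A.IsHermitian then ⨆ i, h.eigenvalues i else 0



variable {d : ℕ}

namespace Aux

abbrev Mat (d : ℕ) := Matrix (Fin d) (Fin d) ℝ

lemma conj_trans (A : Mat d) : Aᴴ = Aᵀ := conjTranspose_eq_transpose_of_trivial A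

lemma psd_smul {A : Mat d} (hA : A.PosSemidef) {c : ℝ} (hc : 0 ≤ c) : (c • A).PosSemidef := by
  refine PosSemidef.of_dotProduct_mulVec_nonneg ?_ ?_
  · unfold Matrix.IsHermitian
    rw [conjTranspose_smul, hA.1]
    simp
  · intro x
    have := hA.dotProduct_mulVec_nonneg x
    have : 0 ≤ c * (star x ⬝ᵥ A *ᵥ x) := mul_nonneg hc this
    simpa [Matrix.smul_mulVec, dotProduct_smul] using this

lemma psd_conj {A : Mat d} (hA : A.PosSemidef) (B : Mat d) : (Bᵀ * A * B).PosSemidef := by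
  rw [← conj_trans]
  exact hA.conjTranspose_mul_mul_same B

lemma shift_psd_iff {A : Mat d} (hA : A.IsHermitian) (c : ℝ) :
    (A - c • 1).PosSemidef ↔ ∀ i, c ≤ hA.eigenvalues i := by
  set V : Mat d := (hA.eigenvectorUnitary : Mat d) with hVdef
  have hVmem : V ∈ Matrix.unitaryGroup (Fin d) ℝ := hA.eigenvectorUnitary.2
  have hV1 : V * star V = 1 := (Matrix.mem_unitaryGroup_iff).mp hVmem
  have hV2 : star V * V = 1 := (Matrix.mem_unitaryGroup_iff').mp hVmem
  have key : A - c • 1 = V * diagonal (fun i => hA.eigenvalues i - c) * star V := by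
    have hdiag : diagonal (fun i => hA.eigenvalues i - c)
        = diagonal (RCLike.ofReal ∘ hA.eigenvalues) - c • (1 : Mat d) := by
      rw [← Matrix.diagonal_one, ← Matrix.diagonal_smul, Matrix.diagonal_sub]
      congr 1
      ext i
      simp
    rw [hdiag, Matrix.mul_sub, Matrix.sub_mul]
    have : V * (c • (1 : Mat d)) * star V = c • (1 : Mat d) := by
      rw [Matrix.mul_smul, Matrix.smul_mul, Matrix.mul_one, hV1]
    rw [this]; congr 1; exact hA.spectral_theorem
  constructor
  · intro h i
    have h2 := h.conjTranspose_mul_mul_same V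
    rw [key, Matrix.star_eq_conjTranspose] at h2
    have heq : Vᴴ * (V * diagonal (fun i => hA.eigenvalues i - c) * Vᴴ) * V
        = diagonal (fun i => hA.eigenvalues i - c) := by
      rw [← Matrix.star_eq_conjTranspose]
      calc star V * (V * diagonal (fun i => hA.eigenvalues i - c) * star V) * V
          = (star V * V) * diagonal (fun i => hA.eigenvalues i - c) * (star V * V) := by
            noncomm_ring
        _ = diagonal (fun i => hA.eigenvalues i - c) := by rw [hV2, Matrix.one_mul, Matrix.mul_one]
    rw [heq] at h2
    exact sub_nonneg.mp (Matrix.posSemidef_diagonal_iff.mp h2 i)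
  · intro h
    rw [key]
    have : (Matrix.diagonal (fun i => hA.eigenvalues i - c)).PosSemidef :=
      Matrix.posSemidef_diagonal_iff.mpr fun i => sub_nonneg.mpr (h i)
    have h2 := this.mul_mul_conjTranspose_same V
    simpa [Matrix.star_eq_conjTranspose] using h2

end Aux

namespace Aux

lemma shift_psd_iff' {A : Mat d} (hA : A.IsHermitian) (c : ℝ) :
    (c • 1 - A).PosSemidef ↔ ∀ i, hA.eigenvalues i ≤ c := by
  set V : Mat d := (hA.eigenvectorUnitary : Mat d) with hVdef
  have hVmem : V ∈ Matrix.unitaryGroup (Fin d) ℝ := hA.eigenvectorUnitary.2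
  have hV1 : V * star V = 1 := (Matrix.mem_unitaryGroup_iff).mp hVmem
  have hV2 : star V * V = 1 := (Matrix.mem_unitaryGroup_iff').mp hVmem
  have key : c • 1 - A = V * diagonal (fun i => c - hA.eigenvalues i) * star V := by
    have hdiag : diagonal (fun i => c - hA.eigenvalues i)
        = c • (1 : Mat d) - diagonal (RCLike.ofReal ∘ hA.eigenvalues) := by
      rw [← Matrix.diagonal_one, ← Matrix.diagonal_smul, Matrix.diagonal_sub]
      congr 1
      ext i
      simp
    rw [hdiag, Matrix.mul_sub, Matrix.sub_mul]
    have : V * (c • (1 : Mat d)) * star V = c • (1 : Mat d) := by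
      rw [Matrix.mul_smul, Matrix.smul_mul, Matrix.mul_one, hV1]
    rw [this]; congr 1; exact hA.spectral_theorem
  constructor
  · intro h i
    have h2 := h.conjTranspose_mul_mul_same V
    rw [key, Matrix.star_eq_conjTranspose] at h2
    have heq : Vᴴ * (V * diagonal (fun i => c - hA.eigenvalues i) * Vᴴ) * V
        = diagonal (fun i => c - hA.eigenvalues i) := by
      rw [← Matrix.star_eq_conjTranspose]
      calc star V * (V * diagonal (fun i => c - hA.eigenvalues i) * star V) * V
          = (star V * V) * diagonal (fun i => c - hA.eigenvalues i) * (star V * V) := by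
            noncomm_ring
        _ = diagonal (fun i => c - hA.eigenvalues i) := by rw [hV2, Matrix.one_mul, Matrix.mul_one]
    rw [heq] at h2
    exact sub_nonneg.mp (Matrix.posSemidef_diagonal_iff.mp h2 i)
  · intro h
    rw [key]
    have : (Matrix.diagonal (fun i => c - hA.eigenvalues i)).PosSemidef :=
      Matrix.posSemidef_diagonal_iff.mpr fun i => sub_nonneg.mpr (h i)
    have h2 := this.mul_mul_conjTranspose_same V
    simpa [Matrix.star_eq_conjTranspose] using h2

lemma lmin_eq {A : Mat d} (hA : A.IsHermitian) : lmin A = ⨅ i, hA.eigenvalues i := dif_pos hA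

lemma lmax_eq {A : Mat d} (hA : A.IsHermitian) : lmax A = ⨆ i, hA.eigenvalues i := dif_pos hA

lemma le_lmin_iff (hd : 0 < d) {A : Mat d} (hA : A.IsHermitian) (c : ℝ) :
    c ≤ lmin A ↔ (A - c • 1).PosSemidef := by
  have : Nonempty (Fin d) := ⟨⟨0, hd⟩⟩
  rw [lmin_eq hA, le_ciInf_iff (Set.Finite.bddBelow (Set.finite_range _)), shift_psd_iff hA]

lemma lmax_le_iff (hd : 0 < d) {A : Mat d} (hA : A.IsHermitian) (c : ℝ) :
    lmax A ≤ c ↔ (c • 1 - A).PosSemidef := by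
  have : Nonempty (Fin d) := ⟨⟨0, hd⟩⟩
  rw [lmax_eq hA, ciSup_le_iff (Set.Finite.bddAbove (Set.finite_range _)), shift_psd_iff' hA]

lemma lmin_le_lmax (hd : 0 < d) {A : Mat d} (hA : A.IsHermitian) : lmin A ≤ lmax A := by
  have : Nonempty (Fin d) := ⟨⟨0, hd⟩⟩
  rw [lmin_eq hA, lmax_eq hA]
  exact le_trans (ciInf_le (Set.Finite.bddBelow (Set.finite_range _)) (⟨0, hd⟩ : Fin d))
    (le_ciSup (Set.Finite.bddAbove (Set.finite_range _)) (⟨0, hd⟩ : Fin d))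

lemma lmin_pos (hd : 0 < d) {A : Mat d} (hA : A.PosDef) : 0 < lmin A := by
  have : Nonempty (Fin d) := ⟨⟨0, hd⟩⟩
  rw [lmin_eq hA.isHermitian]
  obtain ⟨i, hi⟩ := Finite.exists_min (fun i => hA.isHermitian.eigenvalues i)
  have : (⨅ i, hA.isHermitian.eigenvalues i) = hA.isHermitian.eigenvalues i :=
    le_antisymm (ciInf_le (Set.Finite.bddBelow (Set.finite_range _)) i) (le_ciInf hi)
  rw [this]
  exact hA.eigenvalues_pos i

lemma shift_lmin_psd (hd : 0 < d) {A : Mat d} (hA : A.IsHermitian) :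
    (A - lmin A • 1).PosSemidef :=
  (le_lmin_iff hd hA _).mp le_rfl

lemma shift_lmax_psd (hd : 0 < d) {A : Mat d} (hA : A.IsHermitian) :
    (lmax A • 1 - A).PosSemidef :=
  (lmax_le_iff hd hA _).mp le_rfl

end Aux

namespace Aux

open scoped MatrixOrder in
lemma psqrt_of_psd {A : Mat d} (hA : A.PosSemidef) : psqrt A = CFC.sqrt A := by
  rw [psqrt, dif_pos hA, CFC.sqrt_eq_cfc, cfc_nnreal_eq_real _ A, hA.1.cfc_eq]
  simp only [IsHermitian.cfc, Real.coe_sqrt, Real.coe_toNNReal', Unitary.conjStarAlgAut_apply]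
  congr 3
  funext i
  simp [Real.sqrt_eq_zero', max_eq_left (hA.eigenvalues_nonneg i)]

open scoped MatrixOrder in
lemma psqrt_psd {A : Mat d} (hA : A.PosSemidef) : (psqrt A).PosSemidef := by
  rw [psqrt_of_psd hA]; exact Matrix.nonneg_iff_posSemidef.mp (CFC.sqrt_nonneg A)

open scoped MatrixOrder in
lemma psqrt_mul_self {A : Mat d} (hA : A.PosSemidef) : psqrt A * psqrt A = A := by
  rw [psqrt_of_psd hA]; exact CFC.sqrt_mul_sqrt_self A hA.nonneg

open scoped MatrixOrder in
lemma psqrt_unique {A B : Mat d} (hB : B.PosSemidef) (h : B * B = A) : psqrt A = B := by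
  have hA : A.PosSemidef := by rw [← h, ← pow_two]; exact hB.pow 2
  rw [psqrt_of_psd hA]
  exact (CFC.sqrt_eq_iff A B hA.nonneg hB.nonneg).mpr h

lemma psqrt_sq_self {A : Mat d} (hA : A.PosSemidef) : psqrt (A * A) = A :=
  psqrt_unique hA rfl

lemma psqrt_posDef {A : Mat d} (hA : A.PosDef) : (psqrt A).PosDef := by
  have hS := psqrt_psd hA.posSemidef
  refine PosDef.of_dotProduct_mulVec_pos hS.1 fun x hx => ?_
  rcases lt_or_eq_of_le (hS.dotProduct_mulVec_nonneg x) with h | h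
  · exact h
  · exfalso
    have hSx : psqrt A *ᵥ x = 0 := (hS.dotProduct_mulVec_zero_iff x).mp h.symm
    have hAx : A *ᵥ x = 0 := by
      rw [← psqrt_mul_self hA.posSemidef, ← Matrix.mulVec_mulVec, hSx, Matrix.mulVec_zero]
    have := hA.dotProduct_mulVec_pos hx
    rw [hAx, dotProduct_zero] at this
    exact lt_irrefl _ this

lemma psqrt_smul {A : Mat d} (hA : A.PosSemidef) {c : ℝ} (hc : 0 ≤ c) :
    psqrt (c • A) = Real.sqrt c • psqrt A := by
  refine psqrt_unique (psd_smul (psqrt_psd hA) (Real.sqrt_nonneg c)) ?_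
  rw [Matrix.smul_mul, Matrix.mul_smul, smul_smul, Real.mul_self_sqrt hc, psqrt_mul_self hA]

theorem psqrt_mono {A B : Mat d} (hA : A.PosSemidef) (hB : B.PosSemidef)
    (hAB : (B - A).PosSemidef) : (psqrt B - psqrt A).PosSemidef := by
  set S := psqrt A with hSdef
  set T := psqrt B with hTdef
  have hS := psqrt_psd hA
  have hT := psqrt_psd hB
  have hD : (T - S).IsHermitian := hT.1.sub hS.1
  rw [show (T - S).PosSemidef ↔ ((T - S) - (0:ℝ) • 1).PosSemidef by rw [zero_smul, sub_zero]]
  rw [shift_psd_iff hD]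
  intro i
  by_contra hneg
  push_neg at hneg
  set μ := hD.eigenvalues i with hμdef
  set v : Fin d → ℝ := ⇑(hD.eigenvectorBasis i) with hvdef
  have hv : (T - S) *ᵥ v = μ • v := hD.mulVec_eigenvectorBasis i
  have hvne : v ≠ 0 := fun h => hD.eigenvectorBasis.orthonormal.ne_zero i (by ext j; exact congrFun h j)
  have hstar : star v = v := by funext j; simp [v]
  have hkey : 0 ≤ μ * (v ⬝ᵥ T *ᵥ v + v ⬝ᵥ S *ᵥ v) := by
    have h0 : 0 ≤ v ⬝ᵥ (B - A) *ᵥ v := by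
      have := hAB.dotProduct_mulVec_nonneg v; rwa [hstar] at this
    have hfact : B - A = T * (T - S) + (T - S) * S := by
      rw [Matrix.mul_sub, Matrix.sub_mul, psqrt_mul_self hA, psqrt_mul_self hB]
      abel
    rw [hfact, Matrix.add_mulVec, dotProduct_add, ← Matrix.mulVec_mulVec, hv,
      Matrix.mulVec_smul, dotProduct_smul] at h0
    have h2 : v ⬝ᵥ ((T - S) * S) *ᵥ v = μ * (v ⬝ᵥ S *ᵥ v) := by
      rw [← Matrix.mulVec_mulVec, dotProduct_mulVec, ← Matrix.mulVec_transpose,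
        show (T - S)ᵀ = T - S from by rw [← conj_trans]; exact hD, hv]
      simp [smul_dotProduct, dotProduct_smul, smul_eq_mul]
    rw [h2] at h0
    simpa [smul_eq_mul, mul_add] using h0
  have hTv : 0 ≤ v ⬝ᵥ T *ᵥ v := by have := hT.dotProduct_mulVec_nonneg v; rwa [hstar] at this
  have hSv : 0 ≤ v ⬝ᵥ S *ᵥ v := by have := hS.dotProduct_mulVec_nonneg v; rwa [hstar] at this
  have hsum : v ⬝ᵥ T *ᵥ v + v ⬝ᵥ S *ᵥ v ≤ 0 := by
    nlinarith
  have hTv0 : v ⬝ᵥ T *ᵥ v = 0 := le_antisymm (by linarith) hTv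
  have hSv0 : v ⬝ᵥ S *ᵥ v = 0 := le_antisymm (by linarith) hSv
  have hT0 : T *ᵥ v = 0 := (hT.dotProduct_mulVec_zero_iff v).mp (by rw [hstar]; exact hTv0)
  have hS0 : S *ᵥ v = 0 := (hS.dotProduct_mulVec_zero_iff v).mp (by rw [hstar]; exact hSv0)
  have : μ • v = 0 := by rw [← hv, Matrix.sub_mulVec, hT0, hS0, sub_zero]
  have : μ = 0 := by
    by_contra hμ
    exact hvne (by simpa [hμ] using congrArg (fun w => μ⁻¹ • w) this)
  linarith

end Aux

namespace Aux

open MeasureTheory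

lemma enorm'_nonneg (v : Fin d → ℝ) : 0 ≤ enorm' v := Real.sqrt_nonneg _

lemma enorm'_eq_zero {v : Fin d → ℝ} (h : enorm' v = 0) : v = 0 := by
  have hs : ∑ i, (v i)^2 = 0 := by
    have h0 : 0 ≤ ∑ i, (v i)^2 := Finset.sum_nonneg fun i _ => sq_nonneg _
    have := Real.sqrt_eq_zero h0 |>.mp h
    exact this
  funext i
  have := (Finset.sum_eq_zero_iff_of_nonneg (fun i _ => sq_nonneg (v i))).mp hs i (Finset.mem_univ i)
  exact pow_eq_zero_iff (n := 2) (by norm_num) |>.mp this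

lemma abs_le_enorm' (v : Fin d → ℝ) (i : Fin d) : |v i| ≤ enorm' v := by
  rw [← Real.sqrt_sq_eq_abs]
  exact Real.sqrt_le_sqrt (Finset.single_le_sum (f := fun j => (v j)^2)
    (fun j _ => sq_nonneg _) (Finset.mem_univ i))

lemma enorm'_le_sum_abs (v : Fin d → ℝ) : enorm' v ≤ ∑ i, |v i| := by
  have h1 : ∑ i, (v i)^2 ≤ (∑ i, |v i|)^2 := by
    calc ∑ i, (v i)^2 = ∑ i, |v i|^2 := by simp [sq_abs]
      _ ≤ (∑ i, |v i|)^2 := Finset.sum_sq_le_sq_sum_of_nonneg (fun i _ => abs_nonneg _)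
  calc enorm' v = Real.sqrt (∑ i, (v i)^2) := rfl
    _ ≤ Real.sqrt ((∑ i, |v i|)^2) := Real.sqrt_le_sqrt h1
    _ = ∑ i, |v i| := Real.sqrt_sq (Finset.sum_nonneg fun i _ => abs_nonneg _)

lemma enorm'_mulVec_le (U : Mat d) (x : Fin d → ℝ) :
    enorm' (U *ᵥ x) ≤ (∑ i, ∑ j, |U i j|) * enorm' x := by
  calc enorm' (U *ᵥ x) ≤ ∑ i, |(U *ᵥ x) i| := enorm'_le_sum_abs _
    _ ≤ ∑ i, ∑ j, |U i j| * enorm' x := by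
        refine Finset.sum_le_sum fun i _ => ?_
        calc |(U *ᵥ x) i| = |∑ j, U i j * x j| := rfl
          _ ≤ ∑ j, |U i j * x j| := Finset.abs_sum_le_sum_abs _ _
          _ ≤ ∑ j, |U i j| * enorm' x := by
              refine Finset.sum_le_sum fun j _ => ?_
              rw [abs_mul]
              exact mul_le_mul_of_nonneg_left
                ((abs_le_enorm' x j)) (abs_nonneg _)
    _ = (∑ i, ∑ j, |U i j|) * enorm' x := by rw [Finset.sum_mul]; congr 1; funext i; rw [Finset.sum_mul]

/-- The integrand of `FLDP`. -/
noncomputable def gI (U : Mat d) (x : Fin d → ℝ) : Mat d :=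
  if x = 0 then 0 else (enorm' (U *ᵥ x))⁻¹ • vecMulVec (U *ᵥ x) (U *ᵥ x)

lemma FLDP_eq (p : Measure (Fin d → ℝ)) (lam : ℝ) (U : Mat d) :
    FLDP p lam U = mExp p (gI U) + lam • U := rfl

lemma gI_apply (U : Mat d) {x : Fin d → ℝ} (hx : x ≠ 0) (i j : Fin d) :
    gI U x i j = (enorm' (U *ᵥ x))⁻¹ * ((U *ᵥ x) i * (U *ᵥ x) j) := by
  unfold gI
  rw [if_neg hx]
  simp [Matrix.smul_apply, Matrix.vecMulVec_apply, smul_eq_mul]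

lemma gI_entry_abs_le (U : Mat d) (x : Fin d → ℝ) (i j : Fin d) :
    |gI U x i j| ≤ enorm' (U *ᵥ x) := by
  by_cases hx : x = 0
  · unfold gI
    simp [hx, enorm'_nonneg]
  · rw [gI_apply U hx]
    set w := U *ᵥ x with hw
    set e := enorm' w with he
    have he0 : 0 ≤ e := enorm'_nonneg _
    rcases eq_or_lt_of_le he0 with h0 | hpos
    · have hw0 : w = 0 := enorm'_eq_zero h0.symm
      rw [hw0]
      simp [he0]
    · rw [abs_mul, abs_mul, abs_inv, abs_of_pos hpos]
      calc e⁻¹ * (|w i| * |w j|) ≤ e⁻¹ * (e * e) := by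
            refine mul_le_mul_of_nonneg_left ?_ (inv_nonneg.mpr he0)
            exact mul_le_mul (abs_le_enorm' w i) (abs_le_enorm' w j) (abs_nonneg _) he0
        _ = e := by field_simp

lemma gI_measurable (U : Mat d) (i j : Fin d) : Measurable (fun x => gI U x i j) := by
  have hmv : Measurable (fun x : Fin d → ℝ => U *ᵥ x) := by
    refine measurable_pi_iff.mpr fun i => ?_
    simpa [Matrix.mulVec, dotProduct] using
      Finset.measurable_sum Finset.univ (fun j _ => by fun_prop)
  have h1 : Measurable (fun x : Fin d → ℝ => (enorm' (U *ᵥ x))⁻¹ * ((U *ᵥ x) i * (U *ᵥ x) j)) := by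
    apply Measurable.mul
    · apply Measurable.inv
      unfold enorm'
      exact Real.continuous_sqrt.measurable.comp
        (Finset.measurable_sum Finset.univ
          (fun k _ => ((measurable_pi_apply k).comp hmv).pow_const 2))
    · exact ((measurable_pi_apply i).comp hmv).mul ((measurable_pi_apply j).comp hmv)
  have heq : (fun x => gI U x i j)
      = fun x => if x = 0 then 0 else (enorm' (U *ᵥ x))⁻¹ * ((U *ᵥ x) i * (U *ᵥ x) j) := by
    funext x
    by_cases hx : x = 0
    · simp [hx, gI]
    · rw [gI_apply U hx, if_neg hx]
  rw [heq]
  exact Measurable.ite (measurableSet_singleton 0) measurable_const h1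

end Aux

namespace Aux

open MeasureTheory

variable {p : Measure (Fin d → ℝ)}

lemma gI_integrable [IsProbabilityMeasure p] (hbdd : ∃ R : ℝ, ∀ᵐ x ∂p, enorm' x ≤ R)
    (U : Mat d) (i j : Fin d) : Integrable (fun x => gI U x i j) p := by
  obtain ⟨R, hR⟩ := hbdd
  set C := ∑ i, ∑ j, |U i j| with hC
  have hC0 : 0 ≤ C := Finset.sum_nonneg fun i _ => Finset.sum_nonneg fun j _ => abs_nonneg _
  refine Integrable.mono' (integrable_const (C * R)) (gI_measurable U i j).aestronglyMeasurable ?_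
  filter_upwards [hR] with x hx
  calc ‖gI U x i j‖ = |gI U x i j| := rfl
    _ ≤ enorm' (U *ᵥ x) := gI_entry_abs_le U x i j
    _ ≤ C * enorm' x := enorm'_mulVec_le U x
    _ ≤ C * R := mul_le_mul_of_nonneg_left hx hC0

lemma mExp_herm {f : (Fin d → ℝ) → Mat d} (hsym : ∀ x, (f x).IsHermitian) :
    (mExp p f).IsHermitian := by
  unfold Matrix.IsHermitian
  ext i j
  have : ∀ x, f x j i = f x i j := fun x => by
    have := congrFun (congrFun (hsym x) j) i
    simpa using this.symm
  simp only [conjTranspose_apply, mExp, of_apply, star_trivial]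
  exact integral_congr_ae (Filter.Eventually.of_forall fun x => this x)

lemma dot_mExp {f : (Fin d → ℝ) → Mat d} (hint : ∀ i j, Integrable (fun x => f x i j) p)
    (v : Fin d → ℝ) : v ⬝ᵥ (mExp p f) *ᵥ v = ∫ x, v ⬝ᵥ (f x) *ᵥ v ∂p := by
  simp only [dotProduct, Matrix.mulVec, mExp, of_apply]
  have step1 : ∀ i, (v i * ∑ j, (fun j => ∫ x, f x i j ∂p) j * v j)
      = ∫ x, v i * ∑ j, f x i j * v j ∂p := by
    intro i
    rw [show (∑ j, (fun j => ∫ x, f x i j ∂p) j * v j) = ∑ j, ∫ x, f x i j * v j ∂p from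
      Finset.sum_congr rfl fun j _ => (integral_mul_const (v j) _).symm]
    rw [← integral_finset_sum Finset.univ (fun j _ => (hint i j).mul_const (v j))]
    rw [← integral_const_mul]
  have hint2 : ∀ i ∈ Finset.univ, Integrable (fun x => v i * ∑ j, f x i j * v j) p :=
    fun i _ => (integrable_finset_sum Finset.univ
      (fun j _ => (hint i j).mul_const (v j))).const_mul (v i)
  rw [Finset.sum_congr rfl fun i _ => step1 i, ← integral_finset_sum Finset.univ hint2]

lemma mExp_psd {f : (Fin d → ℝ) → Mat d} (hint : ∀ i j, Integrable (fun x => f x i j) p)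
    (hpsd : ∀ x, (f x).PosSemidef) : (mExp p f).PosSemidef := by
  refine PosSemidef.of_dotProduct_mulVec_nonneg (mExp_herm fun x => (hpsd x).1) fun v => ?_
  have hs : star v = v := by funext i; simp
  rw [hs, dot_mExp hint v]
  refine integral_nonneg fun x => ?_
  have := (hpsd x).dotProduct_mulVec_nonneg v
  rwa [hs] at this

lemma mExp_sub {f g : (Fin d → ℝ) → Mat d} (hintf : ∀ i j, Integrable (fun x => f x i j) p)
    (hintg : ∀ i j, Integrable (fun x => g x i j) p) :
    mExp p g - mExp p f = mExp p (fun x => g x - f x) := by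
  ext i j
  simp only [Matrix.sub_apply, mExp, of_apply]
  exact (integral_sub (hintg i j) (hintf i j)).symm

lemma mExp_mono {f g : (Fin d → ℝ) → Mat d} (hintf : ∀ i j, Integrable (fun x => f x i j) p)
    (hintg : ∀ i j, Integrable (fun x => g x i j) p)
    (hpt : ∀ x, (g x - f x).PosSemidef) : (mExp p g - mExp p f).PosSemidef := by
  rw [mExp_sub hintf hintg]
  exact mExp_psd (fun i j => (hintg i j).sub (hintf i j)) hpt

lemma mExp_conj {f : (Fin d → ℝ) → Mat d} (hint : ∀ i j, Integrable (fun x => f x i j) p)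
    (B : Mat d) : mExp p (fun x => Bᵀ * f x * B) = Bᵀ * mExp p f * B := by
  ext i j
  simp only [mExp, of_apply, Matrix.mul_apply, Matrix.transpose_apply]
  have hl : ∀ k, Integrable (fun x => ∑ l, B l i * f x l k) p := fun k =>
    integrable_finset_sum Finset.univ (fun l _ => (hint l k).const_mul (B l i))
  have hk : ∀ k ∈ Finset.univ, Integrable (fun x => (∑ l, B l i * f x l k) * B k j) p :=
    fun k _ => (hl k).mul_const (B k j)
  rw [integral_finset_sum Finset.univ hk]
  refine Finset.sum_congr rfl fun k _ => ?_
  rw [integral_mul_const]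
  congr 1
  rw [integral_finset_sum Finset.univ (fun l _ => (hint l k).const_mul (B l i))]
  exact Finset.sum_congr rfl fun l _ => integral_const_mul _ _

end Aux

namespace Aux

lemma dot_vecMulVec (w v : Fin d → ℝ) :
    v ⬝ᵥ (vecMulVec w w) *ᵥ v = (w ⬝ᵥ v)^2 := by
  simp only [dotProduct, Matrix.mulVec, Matrix.vecMulVec_apply, pow_two, dotProduct]
  rw [Finset.sum_mul]
  refine Finset.sum_congr rfl fun i _ => ?_
  rw [Finset.mul_sum, Finset.mul_sum]
  exact Finset.sum_congr rfl fun j _ => by ring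

lemma vecMulVec_psd (w : Fin d → ℝ) : (vecMulVec w w).PosSemidef := by
  refine PosSemidef.of_dotProduct_mulVec_nonneg ?_ ?_
  · unfold Matrix.IsHermitian
    ext i j
    simp [Matrix.vecMulVec_apply, mul_comm]
  · intro v
    have hs : star v = v := by funext i; simp
    rw [hs, dot_vecMulVec]
    exact sq_nonneg _

lemma conj_vecMulVec (B : Mat d) (w : Fin d → ℝ) :
    B * vecMulVec w w * Bᵀ = vecMulVec (B *ᵥ w) (B *ᵥ w) := by
  ext i j
  simp only [Matrix.mul_apply, Matrix.vecMulVec_apply, Matrix.transpose_apply, Matrix.mulVec,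
    dotProduct]
  rw [Finset.sum_mul]
  calc ∑ k, (∑ l, B i l * (w l * w k)) * B j k
      = ∑ k, ∑ l, (B i l * w l) * (w k * B j k) := Finset.sum_congr rfl fun k _ => by
        rw [Finset.sum_mul]; exact Finset.sum_congr rfl fun l _ => by ring
    _ = ∑ l, ∑ k, (B i l * w l) * (w k * B j k) := Finset.sum_comm
    _ = ∑ l, B i l * w l * ∑ k, B j k * w k := Finset.sum_congr rfl fun l _ => by
        rw [Finset.mul_sum]; exact Finset.sum_congr rfl fun k _ => by ring

lemma enorm'_sq (v : Fin d → ℝ) : (enorm' v)^2 = v ⬝ᵥ v := by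
  rw [enorm', Real.sq_sqrt (Finset.sum_nonneg fun i _ => sq_nonneg _)]
  simp [dotProduct, pow_two]

lemma enorm'_pos {v : Fin d → ℝ} (hv : v ≠ 0) : 0 < enorm' v :=
  lt_of_le_of_ne (enorm'_nonneg v) (fun h => hv (enorm'_eq_zero h.symm))

lemma posDef_smul {A : Mat d} (hA : A.PosDef) {c : ℝ} (hc : 0 < c) : (c • A).PosDef := by
  refine PosDef.of_dotProduct_mulVec_pos (psd_smul hA.posSemidef hc.le).1 fun x hx => ?_
  have := hA.dotProduct_mulVec_pos hx
  have h2 : 0 < c * (star x ⬝ᵥ A *ᵥ x) := mul_pos hc this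
  simpa [Matrix.smul_mulVec, dotProduct_smul] using h2

lemma gI_psd (U : Mat d) (x : Fin d → ℝ) : (gI U x).PosSemidef := by
  unfold gI
  by_cases hx : x = 0
  · simp only [if_pos hx]
    exact Matrix.PosSemidef.zero
  · simp only [if_neg hx]
    exact psd_smul (vecMulVec_psd _) (inv_nonneg.mpr (enorm'_nonneg _))

lemma dot_transpose_mul_self (A : Mat d) (x : Fin d → ℝ) :
    x ⬝ᵥ (Aᵀ * A) *ᵥ x = (A *ᵥ x) ⬝ᵥ (A *ᵥ x) := by
  rw [← Matrix.mulVec_mulVec, dotProduct_mulVec]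
  congr 1
  rw [← Matrix.mulVec_transpose Aᵀ x, Matrix.transpose_transpose]

lemma posDef_transpose_mul_self {A : Mat d} (hA : IsUnit A.det) : (Aᵀ * A).PosDef := by
  have hpsd : (Aᵀ * A).PosSemidef := by
    have := Matrix.posSemidef_conjTranspose_mul_self A
    rwa [conj_trans] at this
  refine PosDef.of_dotProduct_mulVec_pos hpsd.1 fun x hx => ?_
  rcases lt_or_eq_of_le (hpsd.dotProduct_mulVec_nonneg x) with h | h
  · exact h
  · exfalso
    have hs : star x = x := by funext i; simp
    rw [hs, dot_transpose_mul_self] at h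
    have hAx : A *ᵥ x = 0 := by
      rwa [eq_comm, dotProduct_self_eq_zero] at h
    have : x = 0 := by
      have := congrArg (fun v => A⁻¹ *ᵥ v) hAx
      simpa [Matrix.mulVec_mulVec, Matrix.nonsing_inv_mul A hA] using this
    exact hx this

end Aux

namespace Aux

open MeasureTheory

variable {p : Measure (Fin d → ℝ)} [IsProbabilityMeasure p]

lemma mExp_smul (f : (Fin d → ℝ) → Mat d) (c : ℝ) :
    mExp p (fun x => c • f x) = c • mExp p f := by
  ext i j
  simp only [mExp, of_apply, Matrix.smul_apply, smul_eq_mul]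
  exact integral_const_mul c _

lemma integrable_conj {f : (Fin d → ℝ) → Mat d}
    (hint : ∀ i j, Integrable (fun x => f x i j) p) (B : Mat d) (i j : Fin d) :
    Integrable (fun x => (Bᵀ * f x * B) i j) p := by
  have heq : (fun x => (Bᵀ * f x * B) i j)
      = fun x => ∑ k, (∑ l, B l i * f x l k) * B k j := by
    funext x
    simp [Matrix.mul_apply, Matrix.transpose_apply]
  rw [heq]
  exact integrable_finset_sum Finset.univ fun k _ =>
    (integrable_finset_sum Finset.univ fun l _ => (hint l k).const_mul (B l i)).mul_const (B k j)

lemma posDef_conj {B C : Mat d} (hB : B.PosDef) (hC : IsUnit C.det) : (Cᵀ * B * C).PosDef := by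
  have hS := psqrt_posDef hB
  have hSsym : (psqrt B)ᵀ = psqrt B := by
    rw [← conj_trans]; exact hS.isHermitian
  have heq : (psqrt B * C)ᵀ * (psqrt B * C) = Cᵀ * B * C := by
    rw [Matrix.transpose_mul, hSsym, Matrix.mul_assoc, ← Matrix.mul_assoc (psqrt B),
      psqrt_mul_self hB.posSemidef, ← Matrix.mul_assoc]
  rw [← heq]
  refine posDef_transpose_mul_self ?_
  rw [Matrix.det_mul]
  exact ((Matrix.isUnit_iff_isUnit_det (psqrt B)).mp hS.isUnit).mul hC

lemma FLDP_posDef (hbdd : ∃ R : ℝ, ∀ᵐ x ∂p, enorm' x ≤ R) {lam : ℝ} (hlam : 0 < lam)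
    {V : Mat d} (hV : V.PosDef) : (FLDP p lam V).PosDef := by
  rw [FLDP_eq]
  exact Matrix.PosDef.posSemidef_add
    (mExp_psd (gI_integrable hbdd V) (gI_psd V)) (posDef_smul hV hlam)

end Aux

namespace Aux

open MeasureTheory

variable {p : Measure (Fin d → ℝ)} [IsProbabilityMeasure p]

lemma inv_norm_bound {c ew ea : ℝ} (hc : 0 < c) (hew : 0 < ew) (hea : 0 < ea)
    (h : ew^2 ≤ c * ea^2) : ea⁻¹ ≤ Real.sqrt c * ew⁻¹ := by
  have hsc : 0 < Real.sqrt c := Real.sqrt_pos.mpr hc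
  have h1 : ew ≤ Real.sqrt c * ea := by
    have h2 : ew^2 ≤ (Real.sqrt c * ea)^2 := by
      rw [mul_pow, Real.sq_sqrt hc.le]; exact h
    nlinarith [mul_pos hsc hea]
  rw [show ea⁻¹ = 1/ea from (one_div ea).symm,
    show Real.sqrt c * ew⁻¹ = Real.sqrt c / ew from by rw [div_eq_mul_inv]]
  rw [div_le_div_iff₀ hea hew]
  linarith

lemma inv_norm_bound' {c ew ea : ℝ} (hc : 0 < c) (hew : 0 < ew) (hea : 0 < ea)
    (h : c * ea^2 ≤ ew^2) : Real.sqrt c * ew⁻¹ ≤ ea⁻¹ := by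
  have hsc : 0 < Real.sqrt c := Real.sqrt_pos.mpr hc
  have h1 : Real.sqrt c * ea ≤ ew := by
    have h2 : (Real.sqrt c * ea)^2 ≤ ew^2 := by
      rw [mul_pow, Real.sq_sqrt hc.le]; exact h
    nlinarith [mul_pos hsc hea]
  rw [show ea⁻¹ = 1/ea from (one_div ea).symm,
    show Real.sqrt c * ew⁻¹ = Real.sqrt c / ew from by rw [div_eq_mul_inv]]
  rw [div_le_div_iff₀ hew hea]
  linarith

lemma conj_vecMulVec' {B : Mat d} (hB : Bᵀ = B) (w : Fin d → ℝ) :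
    B * vecMulVec w w * B = vecMulVec (B *ᵥ w) (B *ᵥ w) := by
  rw [← conj_vecMulVec B w]
  congr 1
  exact hB.symm

lemma step (hd : 0 < d) (hbdd : ∃ R : ℝ, ∀ᵐ x ∂p, enorm' x ≤ R) {lam : ℝ} (hlam : 0 < lam)
    {V : Mat d} (hV : V.PosDef) :
    (symMat ((psqrt (FLDP p lam V))⁻¹ * V)).PosDef ∧
    Real.sqrt (lmin (FLDP p lam V))
      ≤ lmin (FLDP p lam (symMat ((psqrt (FLDP p lam V))⁻¹ * V))) ∧
    lmax (FLDP p lam (symMat ((psqrt (FLDP p lam V))⁻¹ * V)))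
      ≤ Real.sqrt (lmax (FLDP p lam V)) := by
  classical
  set Fk : Mat d := FLDP p lam V with hFk
  set EU : Mat d := mExp p (gI V) with hEU
  have hsplit : Fk = EU + lam • V := rfl
  have hFpd : Fk.PosDef := FLDP_posDef hbdd hlam hV
  set S : Mat d := psqrt Fk with hSdef
  have hSpd : S.PosDef := psqrt_posDef hFpd
  have hSS : S * S = Fk := psqrt_mul_self hFpd.posSemidef
  have hSsym : Sᵀ = S := by rw [← conj_trans]; exact hSpd.isHermitian
  have hVsym : Vᵀ = V := by rw [← conj_trans]; exact hV.isHermitian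
  set T : Mat d := S⁻¹ with hTdef
  have hTpd : T.PosDef := hSpd.inv
  have hTsym : Tᵀ = T := by rw [← conj_trans]; exact hTpd.isHermitian
  have hSdet : IsUnit S.det := (Matrix.isUnit_iff_isUnit_det S).mp hSpd.isUnit
  have hVdet : IsUnit V.det := (Matrix.isUnit_iff_isUnit_det V).mp hV.isUnit
  have hTS : T * S = 1 := Matrix.nonsing_inv_mul S hSdet
  have hST : S * T = 1 := Matrix.mul_nonsing_inv S hSdet
  have hTdet : IsUnit T.det := by
    have := Matrix.isUnit_nonsing_inv_det S hSdet
    exact this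
  set A : Mat d := T * V with hAdef
  have hAdet : IsUnit A.det := by rw [hAdef, Matrix.det_mul]; exact hTdet.mul hVdet
  have hAT : Aᵀ = V * T := by rw [hAdef, Matrix.transpose_mul, hTsym, hVsym]
  have hATApd : (Aᵀ * A).PosDef := posDef_transpose_mul_self hAdet
  have hsym_eq : symMat ((psqrt (FLDP p lam V))⁻¹ * V) = psqrt (Aᵀ * A) := rfl
  set U' : Mat d := psqrt (Aᵀ * A) with hU'def
  have hU'pd : U'.PosDef := psqrt_posDef hATApd
  have hU'sq : U' * U' = Aᵀ * A := psqrt_mul_self hATApd.posSemidef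
  have hU'sym : U'ᵀ = U' := by rw [← conj_trans]; exact hU'pd.isHermitian
  have hU'det : IsUnit U'.det := (Matrix.isUnit_iff_isUnit_det U').mp hU'pd.isUnit
  have hU'i : U'⁻¹ * U' = 1 := Matrix.nonsing_inv_mul U' hU'det
  have hU'i' : U' * U'⁻¹ = 1 := Matrix.mul_nonsing_inv U' hU'det
  have hU'isym : (U'⁻¹)ᵀ = U'⁻¹ := by rw [Matrix.transpose_nonsing_inv, hU'sym]
  set Q : Mat d := A * U'⁻¹ with hQdef
  have hQt : Qᵀ = U'⁻¹ * Aᵀ := by rw [hQdef, Matrix.transpose_mul, hU'isym]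
  have hQtA : Qᵀ * A = U' := by
    rw [hQt, Matrix.mul_assoc, ← hU'sq, ← Matrix.mul_assoc, hU'i, Matrix.one_mul]
  have hAtQ : Aᵀ * Q = U' := by
    rw [hQdef, ← Matrix.mul_assoc, ← hU'sq, Matrix.mul_assoc, hU'i', Matrix.mul_one]
  have hQQ : Qᵀ * Q = 1 := by
    rw [hQdef, ← Matrix.mul_assoc, hQtA, hU'i']
  -- scalar bounds
  set m : ℝ := lmin Fk with hmdef
  set M : ℝ := lmax Fk with hMdef
  have hm : 0 < m := lmin_pos hd hFpd
  have hmM : m ≤ M := lmin_le_lmax hd hFpd.isHermitian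
  have hM : 0 < M := lt_of_lt_of_le hm hmM
  have hmPSD : (Fk - m • 1).PosSemidef := shift_lmin_psd hd hFpd.isHermitian
  have hMPSD : (M • 1 - Fk).PosSemidef := shift_lmax_psd hd hFpd.isHermitian
  have hTFT : T * Fk * T = 1 := by
    rw [← hSS, Matrix.mul_assoc, Matrix.mul_assoc S, hST, Matrix.mul_one, hTS]
  have hupT : (M • (T * T) - 1).PosSemidef := by
    have h := psd_conj hMPSD T
    have heq : Tᵀ * (M • 1 - Fk) * T = M • (T * T) - 1 := by
      rw [hTsym, Matrix.mul_sub, Matrix.sub_mul, Matrix.mul_smul, Matrix.smul_mul,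
        Matrix.mul_one, hTFT]
    rwa [heq] at h
  have hloT : (1 - m • (T * T)).PosSemidef := by
    have h := psd_conj hmPSD T
    have heq : Tᵀ * (Fk - m • 1) * T = 1 - m • (T * T) := by
      rw [hTsym, Matrix.mul_sub, Matrix.sub_mul, Matrix.mul_smul, Matrix.smul_mul,
        Matrix.mul_one, hTFT]
    rwa [heq] at h
  -- pointwise matrix bounds
  have hmv0 : ∀ (B : Mat d) (x : Fin d → ℝ), x ≠ 0 → IsUnit B.det → B *ᵥ x ≠ 0 := by
    intro B x hx hB h0
    have := congrArg (fun v => B⁻¹ *ᵥ v) h0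
    simp only [Matrix.mulVec_mulVec, Matrix.nonsing_inv_mul B hB, Matrix.one_mulVec,
      Matrix.mulVec_zero] at this
    exact hx this
  have hnorm : ∀ x : Fin d → ℝ,
      (enorm' (A *ᵥ x))^2 = (V *ᵥ x) ⬝ᵥ (T * T) *ᵥ (V *ᵥ x) := by
    intro x
    have hxa : A *ᵥ x = T *ᵥ (V *ᵥ x) := by rw [hAdef, ← Matrix.mulVec_mulVec]
    rw [hxa, enorm'_sq, ← dot_transpose_mul_self T (V *ᵥ x), hTsym]
  have hscup : ∀ x : Fin d → ℝ, x ≠ 0 →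
      (enorm' (A *ᵥ x))⁻¹ ≤ Real.sqrt M * (enorm' (V *ᵥ x))⁻¹ := by
    intro x hx
    have hw : V *ᵥ x ≠ 0 := hmv0 V x hx hVdet
    have ha : A *ᵥ x ≠ 0 := hmv0 A x hx hAdet
    refine inv_norm_bound hM (enorm'_pos hw) (enorm'_pos ha) ?_
    have h0 := hupT.dotProduct_mulVec_nonneg (V *ᵥ x)
    have hstar : star (V *ᵥ x) = V *ᵥ x := by funext i; simp
    rw [hstar, Matrix.sub_mulVec, dotProduct_sub, Matrix.smul_mulVec, dotProduct_smul,
      Matrix.one_mulVec, sub_nonneg, smul_eq_mul] at h0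
    rw [enorm'_sq, hnorm x]
    exact h0
  have hsclo : ∀ x : Fin d → ℝ, x ≠ 0 →
      Real.sqrt m * (enorm' (V *ᵥ x))⁻¹ ≤ (enorm' (A *ᵥ x))⁻¹ := by
    intro x hx
    have hw : V *ᵥ x ≠ 0 := hmv0 V x hx hVdet
    have ha : A *ᵥ x ≠ 0 := hmv0 A x hx hAdet
    refine inv_norm_bound' hm (enorm'_pos hw) (enorm'_pos ha) ?_
    have h0 := hloT.dotProduct_mulVec_nonneg (V *ᵥ x)
    have hstar : star (V *ᵥ x) = V *ᵥ x := by funext i; simp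
    rw [hstar, Matrix.sub_mulVec, dotProduct_sub, Matrix.smul_mulVec, dotProduct_smul,
      Matrix.one_mulVec, sub_nonneg, smul_eq_mul] at h0
    rw [hnorm x, enorm'_sq]
    exact h0
  have hconj_gI : ∀ x : Fin d → ℝ, x ≠ 0 → Tᵀ * gI V x * T
      = (enorm' (V *ᵥ x))⁻¹ • vecMulVec (A *ᵥ x) (A *ᵥ x) := by
    intro x hx
    have hxa : A *ᵥ x = T *ᵥ (V *ᵥ x) := by rw [hAdef, ← Matrix.mulVec_mulVec]
    rw [hTsym, show gI V x = (enorm' (V *ᵥ x))⁻¹ • vecMulVec (V *ᵥ x) (V *ᵥ x) from by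
      unfold gI; rw [if_neg hx]]
    rw [Matrix.mul_smul, Matrix.smul_mul, conj_vecMulVec' hTsym, hxa]
  have hptup : ∀ x : Fin d → ℝ,
      (Real.sqrt M • (Tᵀ * gI V x * T) - gI A x).PosSemidef := by
    intro x
    by_cases hx : x = 0
    · subst hx
      have h1 : gI V 0 = 0 := by unfold gI; rw [if_pos rfl]
      have h2 : gI A 0 = 0 := by unfold gI; rw [if_pos rfl]
      rw [h1, h2, Matrix.mul_zero, Matrix.zero_mul, smul_zero, sub_zero]
      exact Matrix.PosSemidef.zero
    · rw [hconj_gI x hx, show gI A x = (enorm' (A *ᵥ x))⁻¹ • vecMulVec (A *ᵥ x) (A *ᵥ x) from by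
        unfold gI; rw [if_neg hx]]
      rw [smul_smul, ← sub_smul]
      refine psd_smul (vecMulVec_psd _) ?_
      exact sub_nonneg.mpr (hscup x hx)
  have hptlo : ∀ x : Fin d → ℝ,
      (gI A x - Real.sqrt m • (Tᵀ * gI V x * T)).PosSemidef := by
    intro x
    by_cases hx : x = 0
    · subst hx
      have h1 : gI V 0 = 0 := by unfold gI; rw [if_pos rfl]
      have h2 : gI A 0 = 0 := by unfold gI; rw [if_pos rfl]
      rw [h1, h2, Matrix.mul_zero, Matrix.zero_mul, smul_zero, sub_zero]
      exact Matrix.PosSemidef.zero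
    · rw [hconj_gI x hx, show gI A x = (enorm' (A *ᵥ x))⁻¹ • vecMulVec (A *ᵥ x) (A *ᵥ x) from by
        unfold gI; rw [if_neg hx]]
      rw [smul_smul, ← sub_smul]
      refine psd_smul (vecMulVec_psd _) ?_
      exact sub_nonneg.mpr (hsclo x hx)
  -- integrated bounds
  have hintV := gI_integrable hbdd V
  have hintA := gI_integrable hbdd A
  have hintCup : ∀ i j, Integrable (fun x => (Real.sqrt M • (Tᵀ * gI V x * T)) i j) p := by
    intro i j
    have heq : (fun x => (Real.sqrt M • (Tᵀ * gI V x * T)) i j)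
        = fun x => Real.sqrt M * ((Tᵀ * gI V x * T) i j) := by
      funext x; simp [Matrix.smul_apply]
    rw [heq]
    exact (integrable_conj hintV T i j).const_mul _
  have hintClo : ∀ i j, Integrable (fun x => (Real.sqrt m • (Tᵀ * gI V x * T)) i j) p := by
    intro i j
    have heq : (fun x => (Real.sqrt m • (Tᵀ * gI V x * T)) i j)
        = fun x => Real.sqrt m * ((Tᵀ * gI V x * T) i j) := by
      funext x; simp [Matrix.smul_apply]
    rw [heq]
    exact (integrable_conj hintV T i j).const_mul _
  have hEup : (Real.sqrt M • (Tᵀ * EU * T) - mExp p (gI A)).PosSemidef := by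
    have h1 := mExp_mono hintA hintCup hptup
    rwa [show mExp p (fun x => Real.sqrt M • (Tᵀ * gI V x * T))
        = Real.sqrt M • (Tᵀ * EU * T) from by
      rw [mExp_smul, mExp_conj hintV T]] at h1
  have hElo : (mExp p (gI A) - Real.sqrt m • (Tᵀ * EU * T)).PosSemidef := by
    have h1 := mExp_mono hintClo hintA hptlo
    rwa [show mExp p (fun x => Real.sqrt m • (Tᵀ * gI V x * T))
        = Real.sqrt m • (Tᵀ * EU * T) from by
      rw [mExp_smul, mExp_conj hintV T]] at h1
  -- the lambda part
  set P : Mat d := T * V * T with hPdef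
  have hPpd : P.PosDef := by
    have := posDef_conj hV hTdet
    rwa [hTsym] at this
  have hPsym : Pᵀ = P := by rw [← conj_trans]; exact hPpd.isHermitian
  have hAAT : A * Aᵀ = P * Fk * P := by
    rw [hAdef, hAT, hPdef, ← hSS]
    calc T * V * (V * T) = T * V * 1 * 1 * (V * T) := by rw [Matrix.mul_one, Matrix.mul_one]
      _ = T * V * (T * S) * (S * T) * (V * T) := by rw [hTS, hST]
      _ = T * V * T * (S * S) * (T * V * T) := by noncomm_ring
  have hup2 : (M • (P * P) - A * Aᵀ).PosSemidef := by
    have h := psd_conj hMPSD P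
    have heq : Pᵀ * (M • 1 - Fk) * P = M • (P * P) - A * Aᵀ := by
      rw [hPsym, Matrix.mul_sub, Matrix.sub_mul, Matrix.mul_smul, Matrix.smul_mul,
        Matrix.mul_one, ← hAAT]
    rwa [heq] at h
  have hlo2 : (A * Aᵀ - m • (P * P)).PosSemidef := by
    have h := psd_conj hmPSD P
    have heq : Pᵀ * (Fk - m • 1) * P = A * Aᵀ - m • (P * P) := by
      rw [hPsym, Matrix.mul_sub, Matrix.sub_mul, Matrix.mul_smul, Matrix.smul_mul,
        Matrix.mul_one, ← hAAT]
    rwa [heq] at h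
  have hAATpsd : (A * Aᵀ).PosSemidef := by
    have := Matrix.posSemidef_self_mul_conjTranspose A
    rwa [conj_trans] at this
  have hPPpsd : (P * P).PosSemidef := by
    have h := Matrix.posSemidef_conjTranspose_mul_self P
    rw [conj_trans, hPsym] at h
    exact h
  have hPP : psqrt (P * P) = P := psqrt_sq_self hPpd.posSemidef
  have hsqup : (Real.sqrt M • P - psqrt (A * Aᵀ)).PosSemidef := by
    have h := psqrt_mono hAATpsd (psd_smul hPPpsd hM.le) hup2
    rwa [psqrt_smul hPPpsd hM.le, hPP] at h
  have hsqlo : (psqrt (A * Aᵀ) - Real.sqrt m • P).PosSemidef := by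
    have h := psqrt_mono (psd_smul hPPpsd hm.le) hAATpsd hlo2
    rwa [psqrt_smul hPPpsd hm.le, hPP] at h
  -- assemble G
  set G : Mat d := mExp p (gI A) + lam • psqrt (A * Aᵀ) with hGdef
  have hone : (1 : Mat d) = Tᵀ * EU * T + lam • P := by
    have h2 : T * Fk * T = T * EU * T + lam • P := by
      rw [hsplit, Matrix.mul_add, Matrix.add_mul, Matrix.mul_smul, Matrix.smul_mul, hPdef]
    rw [← hTFT, h2, hTsym]
  have hGup : (Real.sqrt M • (1 : Mat d) - G).PosSemidef := by
    have heq : Real.sqrt M • (1 : Mat d) - G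
        = (Real.sqrt M • (Tᵀ * EU * T) - mExp p (gI A))
          + lam • (Real.sqrt M • P - psqrt (A * Aᵀ)) := by
      rw [hGdef, hone, smul_add, smul_sub, smul_comm lam (Real.sqrt M) P]
      abel
    rw [heq]
    exact hEup.add (psd_smul hsqup hlam.le)
  have hGlo : (G - Real.sqrt m • (1 : Mat d)).PosSemidef := by
    have heq : G - Real.sqrt m • (1 : Mat d)
        = (mExp p (gI A) - Real.sqrt m • (Tᵀ * EU * T))
          + lam • (psqrt (A * Aᵀ) - Real.sqrt m • P) := by
      rw [hGdef, hone, smul_add, smul_sub, smul_comm lam (Real.sqrt m) P]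
      abel
    rw [heq]
    exact hElo.add (psd_smul hsqlo hlam.le)
  -- conjugation identity
  have hgIU' : ∀ x, gI U' x = Qᵀ * gI A x * Q := by
    intro x
    by_cases hx : x = 0
    · subst hx
      unfold gI
      rw [if_pos rfl, if_pos rfl, Matrix.mul_zero, Matrix.zero_mul]
    · have hU'x : U' *ᵥ x = Qᵀ *ᵥ (A *ᵥ x) := by rw [Matrix.mulVec_mulVec, hQtA]
      have hnormU' : enorm' (U' *ᵥ x) = enorm' (A *ᵥ x) := by
        have h2 : (enorm' (U' *ᵥ x))^2 = (enorm' (A *ᵥ x))^2 := by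
          rw [enorm'_sq, enorm'_sq]
          calc (U' *ᵥ x) ⬝ᵥ (U' *ᵥ x) = x ⬝ᵥ (U'ᵀ * U') *ᵥ x :=
              (dot_transpose_mul_self U' x).symm
            _ = x ⬝ᵥ (Aᵀ * A) *ᵥ x := by rw [hU'sym, hU'sq]
            _ = (A *ᵥ x) ⬝ᵥ (A *ᵥ x) := dot_transpose_mul_self A x
        rw [← Real.sqrt_sq (enorm'_nonneg (U' *ᵥ x)), h2,
          Real.sqrt_sq (enorm'_nonneg (A *ᵥ x))]
      unfold gI
      rw [if_neg hx, if_neg hx, hnormU', hU'x, Matrix.mul_smul, Matrix.smul_mul]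
      congr 1
      rw [← conj_vecMulVec Qᵀ (A *ᵥ x), Matrix.transpose_transpose]
  have hQPQ : Qᵀ * psqrt (A * Aᵀ) * Q = U' := by
    have hABA : psqrt (A * Aᵀ) = A * U'⁻¹ * Aᵀ := by
      refine psqrt_unique ?_ ?_
      · have hU'ipsd : (U'⁻¹).PosSemidef := hU'pd.inv.posSemidef
        have h := psd_conj hU'ipsd Aᵀ
        rwa [Matrix.transpose_transpose] at h
      · calc A * U'⁻¹ * Aᵀ * (A * U'⁻¹ * Aᵀ)
            = A * U'⁻¹ * (Aᵀ * A) * U'⁻¹ * Aᵀ := by noncomm_ring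
          _ = A * U'⁻¹ * (U' * U') * U'⁻¹ * Aᵀ := by rw [hU'sq]
          _ = A * (U'⁻¹ * U') * (U' * U'⁻¹) * Aᵀ := by noncomm_ring
          _ = A * Aᵀ := by rw [hU'i, hU'i', Matrix.mul_one, Matrix.mul_one]
    rw [hABA]
    calc Qᵀ * (A * U'⁻¹ * Aᵀ) * Q = (Qᵀ * A) * U'⁻¹ * (Aᵀ * Q) := by noncomm_ring
      _ = U' * U'⁻¹ * U' := by rw [hQtA, hAtQ]
      _ = U' := by rw [hU'i', Matrix.one_mul]
  have hF'Q : FLDP p lam U' = Qᵀ * G * Q := by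
    rw [FLDP_eq, hGdef]
    rw [show mExp p (gI U') = Qᵀ * mExp p (gI A) * Q from by
      rw [← mExp_conj hintA Q]; exact congrArg (mExp p) (funext hgIU')]
    rw [Matrix.mul_add, Matrix.add_mul]
    congr 1
    rw [Matrix.mul_smul, Matrix.smul_mul, hQPQ]
  have hF'pd : (FLDP p lam U').PosDef := FLDP_posDef hbdd hlam hU'pd
  have hchain_up : (Real.sqrt M • (1 : Mat d) - FLDP p lam U').PosSemidef := by
    have h := psd_conj hGup Q
    have heq : Qᵀ * (Real.sqrt M • 1 - G) * Q
        = Real.sqrt M • (1 : Mat d) - FLDP p lam U' := by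
      rw [Matrix.mul_sub, Matrix.sub_mul, Matrix.mul_smul, Matrix.smul_mul, Matrix.mul_one,
        hQQ, hF'Q]
    rwa [heq] at h
  have hchain_lo : (FLDP p lam U' - Real.sqrt m • (1 : Mat d)).PosSemidef := by
    have h := psd_conj hGlo Q
    have heq : Qᵀ * (G - Real.sqrt m • 1) * Q
        = FLDP p lam U' - Real.sqrt m • (1 : Mat d) := by
      rw [Matrix.mul_sub, Matrix.sub_mul, Matrix.mul_smul, Matrix.smul_mul, Matrix.mul_one,
        hQQ, hF'Q]
    rwa [heq] at h
  refine ⟨?_, ?_, ?_⟩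
  · rw [hsym_eq]; exact hU'pd
  · rw [hsym_eq]
    exact (le_lmin_iff hd hF'pd.isHermitian _).mpr hchain_lo
  · rw [hsym_eq]
    exact (lmax_le_iff hd hF'pd.isHermitian _).mpr hchain_up

end Aux

/-- Eigenvalue contraction for the exact spectral iteration of `FLDP`. -/
theorem stmt6 {d : ℕ} (hd : 0 < d) (p : Measure (Fin d → ℝ)) [IsProbabilityMeasure p]
    (hbdd : ∃ R : ℝ, ∀ᵐ x ∂p, enorm' x ≤ R) (lam : ℝ) (hlam : 0 < lam)
    (U F : ℕ → Matrix (Fin d) (Fin d) ℝ)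
    (hU0 : U 0 = 1)
    (hF : ∀ k, F k = FLDP p lam (U k))
    (hUrec : ∀ k, U (k+1) = symMat ((psqrt (F k))⁻¹ * U k)) :
    ∀ k, Real.sqrt (lmin (F k)) ≤ lmin (F (k+1))
      ∧ lmin (F (k+1)) ≤ lmax (F (k+1))
      ∧ lmax (F (k+1)) ≤ Real.sqrt (lmax (F k)) := by
  have hinv : ∀ k, (U k).PosDef := by
    intro k
    induction k with
    | zero => rw [hU0]; exact Matrix.PosDef.one
    | succ n ih =>
      rw [hUrec n, hF n]
      exact (Aux.step hd hbdd hlam ih).1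
  intro k
  have hstep := Aux.step (p := p) hd hbdd hlam (hinv k)
  refine ⟨?_, ?_, ?_⟩
  · rw [hF (k+1), hUrec k, hF k]
    exact hstep.2.1
  · have hpd := Aux.FLDP_posDef (p := p) hbdd hlam (hinv (k+1))
    rw [hF (k+1)]
    exact Aux.lmin_le_lmax hd hpd.isHermitian
  · rw [hF (k+1), hUrec k, hF k]
    exact hstep.2.2
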